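/- The characteristic polynomial p has exactly two positive real roots, counted with multiplicity; that is, the multiset of real roots of p that are strictly positive has cardinality 2 (one of them being the root y = 1). -/

import Mathlib

open Polynomial Finset

/-- The characteristic polynomial `p` has exactly two positive real roots, counted with
multiplicity, one of them being `y = 1`. -/
theorem stmt_7 (m : ℕ) (hm : 2 ≤ m) (f : ℕ → ℝ)
    (hfnonneg : ∀ k, 0 ≤ f k) (hfsum : ∑ k ∈ Finset.range (m + 1), f k = 1)
    (hf0 : 0 < f 0) (hfm : 0 < f m)
    (hmean : ∑ k ∈ Finset.range (m + 1), (k : ℝ) * f k < 1)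
    (α : ℕ → ℝ)
    (hα0 : α 0 = (1 - f 1) / f 0)
    (hαk : ∀ k, 1 ≤ k → k ≤ m - 1 → α k = -(f (k + 1)) / f 0)
    (p : Polynomial ℝ)
    (hp : p = X ^ m - ∑ k ∈ Finset.range m, C (α k) * X ^ (m - 1 - k)) :
    (p.roots.filter (fun z => 0 < z)).card = 2 ∧ (1 : ℝ) ∈ p.roots := by
  clear hmean
  obtain ⟨n, rfl⟩ : ∃ n, m = n + 2 := ⟨m - 2, by omega⟩
  have hf0' : f 0 ≠ 0 := ne_of_gt hf0
  have hfsum' : ∑ k ∈ range (n + 3), f k = 1 := by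
    rw [show n + 3 = n + 2 + 1 from by omega]; exact hfsum
  have hfm' : 0 < f (n + 2) := hfm
  simp only [show n + 2 - 1 = n + 1 from by omega] at hp hαk
  -- the polynomials q and r
  set q : ℝ[X] := (∑ k ∈ range (n+3), C (f k) * X^(n+2-k)) - X^(n+1) with hq
  set r : ℝ[X] := C (f 0) * X^(n+1)
      - ∑ k ∈ range (n+3), ∑ i ∈ range (k-1), C (f k) * X^(n+2-k+i) with hr
  -- Step A : C (f 0) * p = q
  have hqp : C (f 0) * p = q := by
    rw [hp, hq, mul_sub, Finset.mul_sum]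
    rw [Finset.sum_range_succ' (fun k => C (f 0) * (C (α k) * X ^ (n + 1 - k))) (n+1)]
    rw [Finset.sum_range_succ' (fun k => C (f k) * X ^ (n + 2 - k)) (n+2)]
    rw [Finset.sum_range_succ' (fun k => C (f (k+1)) * X ^ (n + 2 - (k+1))) (n+1)]
    have e1 : ∀ k ∈ range (n+1), C (f 0) * (C (α (k+1)) * X ^ (n + 1 - (k+1))) =
        -(C (f (k+1+1)) * X ^ (n + 2 - (k+1+1))) := by
      intro k hk
      simp only [mem_range] at hk
      rw [hαk (k+1) (by omega) (by omega)]
      have h2 : n + 1 - (k+1) = n + 2 - (k+1+1) := by omega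
      have h3 : f 0 * (-f (k+1+1) / f 0) = -(f (k+1+1)) := by field_simp
      rw [h2, ← mul_assoc, ← C_mul, h3, C_neg, neg_mul]
    rw [Finset.sum_congr rfl e1, hα0]
    have h4 : C (f 0) * (C ((1 - f 1) / f 0) * X ^ (n + 1 - 0)) = (1 - C (f 1)) * X ^ (n+1) := by
      have h5 : f 0 * ((1 - f 1) / f 0) = 1 - f 1 := by field_simp
      rw [← mul_assoc, ← C_mul, h5, C_sub, C_1, Nat.sub_zero]
    rw [h4]
    rw [Finset.sum_neg_distrib]
    have h6 : C (f 0) * X ^ (n + 2) = C (f (0:ℕ)) * X ^ (n + 2 - 0) := by norm_num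
    rw [h6]
    norm_num
    ring
  -- Step B : q = (X - 1) * r
  have hfac : q = (X - 1) * r := by
    apply Polynomial.funext
    intro x
    simp only [hq, hr, eval_sub, eval_mul, eval_pow, eval_X, eval_one, eval_C, eval_finset_sum]
    have key : ∀ k ∈ range (n+3), (x - 1) * ∑ i ∈ range (k-1), f k * x^(n+2-k+i)
        = f k * (x ^ (n+2-k+(k-1)) - x ^ (n+2-k)) := by
      intro k hk
      have : ∑ i ∈ range (k-1), f k * x^(n+2-k+i)
          = f k * (x^(n+2-k) * ∑ i ∈ range (k-1), x^i) := by
        rw [Finset.mul_sum, Finset.mul_sum]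
        refine Finset.sum_congr rfl fun i _ => ?_
        rw [pow_add]
      rw [this, show (x-1) * (f k * (x^(n+2-k) * ∑ i ∈ range (k-1), x^i))
          = f k * (x^(n+2-k) * ((x-1) * ∑ i ∈ range (k-1), x^i)) from by ring,
        mul_geom_sum, mul_sub, mul_one, ← pow_add]
    rw [show (x - 1) * (f 0 * x ^ (n + 1)
          - ∑ k ∈ range (n+3), ∑ i ∈ range (k-1), f k * x ^ (n+2-k+i))
        = (x-1) * (f 0 * x^(n+1))
          - ∑ k ∈ range (n+3), (x-1) * ∑ i ∈ range (k-1), f k * x^(n+2-k+i) from by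
          rw [mul_sub, Finset.mul_sum]]
    rw [Finset.sum_congr rfl key]
    rw [show (∑ k ∈ range (n+3), f k * (x ^ (n+2-k+(k-1)) - x ^ (n+2-k)))
        = (∑ k ∈ range (n+3), f k * x ^ (n+2-k+(k-1))) - ∑ k ∈ range (n+3), f k * x ^ (n+2-k) from by
          rw [← Finset.sum_sub_distrib]
          exact Finset.sum_congr rfl fun k _ => mul_sub _ _ _]
    have h1 : ∑ k ∈ range (n+3), f k * x ^ (n+2-k+(k-1))
        = f 0 * x^(n+2) + (∑ k ∈ range (n+2), f (k+1)) * x^(n+1) := by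
      rw [Finset.sum_range_succ' (fun k => f k * x ^ (n+2-k+(k-1))) (n+2), Finset.sum_mul]
      have : ∀ k ∈ range (n+2), f (k+1) * x ^ (n+2-(k+1)+((k+1)-1)) = f (k+1) * x^(n+1) := by
        intro k hk
        simp only [mem_range] at hk
        congr 2
        omega
      rw [Finset.sum_congr rfl this]
      norm_num
      ring
    have h2 : ∑ k ∈ range (n+2), f (k+1) = 1 - f 0 := by
      rw [Finset.sum_range_succ' f (n+2)] at hfsum'
      linarith
    rw [h1, h2]
    ring
  -- Step C : evaluation formulas and the key inequality
  have aux : ∀ (y : ℝ) (e : ℕ), y * ((e:ℝ) * y^(e-1)) = (e:ℝ) * y^e := by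
    intro y e
    cases e with
    | zero => simp
    | succ e => push_cast; rw [pow_succ]; ring
  have heval : ∀ y : ℝ, r.eval y = f 0 * y^(n+1)
      - ∑ k ∈ range (n+3), ∑ i ∈ range (k-1), f k * y^(n+2-k+i) := by
    intro y; rw [hr]; simp [eval_finset_sum]
  have hder : ∀ y : ℝ, (derivative r).eval y = f 0 * (((n:ℝ)+1) * y^n)
      - ∑ k ∈ range (n+3), ∑ i ∈ range (k-1), f k * (((n+2-k+i:ℕ):ℝ) * y^(n+2-k+i-1)) := by
    intro y
    rw [hr]
    simp only [derivative_sub, derivative_C_mul, derivative_X_pow, derivative_sum,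
      eval_sub, eval_mul, eval_pow, eval_C, eval_X, eval_finset_sum, eval_natCast]
    push_cast
    norm_num
  have hTpos : ∀ y : ℝ, 0 < y →
      ((n:ℝ)+1) * f (n+2) ≤ y * (derivative r).eval y - ((n:ℝ)+1) * r.eval y := by
    have hTid : ∀ y : ℝ, y * (derivative r).eval y - ((n:ℝ)+1) * r.eval y
        = ∑ k ∈ range (n+3), ∑ i ∈ range (k-1), f k * ((k-1-i:ℕ):ℝ) * y^(n+2-k+i) := by
      intro y
      rw [heval, hder]
      have step : (((n:ℝ)+1) * ∑ k ∈ range (n+3), ∑ i ∈ range (k-1), f k * y^(n+2-k+i))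
          - y * ∑ k ∈ range (n+3), ∑ i ∈ range (k-1), f k * (((n+2-k+i:ℕ):ℝ) * y^(n+2-k+i-1))
          = ∑ k ∈ range (n+3), ∑ i ∈ range (k-1), f k * ((k-1-i:ℕ):ℝ) * y^(n+2-k+i) := by
        rw [Finset.mul_sum, Finset.mul_sum, ← Finset.sum_sub_distrib]
        refine Finset.sum_congr rfl fun k hk => ?_
        rw [Finset.mul_sum, Finset.mul_sum, ← Finset.sum_sub_distrib]
        refine Finset.sum_congr rfl fun i hi => ?_
        simp only [mem_range] at hk hi
        have h1 : ((n+2-k+i:ℕ):ℝ) = ((n:ℝ)+1) - ((k-1-i:ℕ):ℝ) := by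
          have hn : (n+2-k+i) + (k-1-i) = n+1 := by omega
          have hc : ((n+2-k+i:ℕ):ℝ) + ((k-1-i:ℕ):ℝ) = ((n:ℝ)+1) := by
            exact_mod_cast congrArg (Nat.cast : ℕ → ℝ) hn
          linarith
        rw [show y * (f k * (((n+2-k+i:ℕ):ℝ) * y^(n+2-k+i-1)))
            = f k * (y * (((n+2-k+i:ℕ):ℝ) * y^(n+2-k+i-1))) from by ring,
          show y * (((n+2-k+i:ℕ):ℝ) * y^(n+2-k+i-1)) = ((n+2-k+i:ℕ):ℝ) * y^(n+2-k+i) from aux y _,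
          h1]
        ring
      rw [mul_sub, mul_sub,
        show y * (f 0 * (((n:ℝ)+1) * y^n)) = ((n:ℝ)+1) * (f 0 * y^(n+1)) from by rw [pow_succ]; ring]
      linarith [step]
    intro y hy
    rw [hTid y]
    have inner_nonneg : ∀ k ∈ range (n+3),
        (0:ℝ) ≤ ∑ i ∈ range (k-1), f k * ((k-1-i:ℕ):ℝ) * y^(n+2-k+i) := by
      intro k _
      refine Finset.sum_nonneg fun i _ => ?_
      have := hfnonneg k
      positivity
    have h2 : ((n:ℝ)+1) * f (n+2) ≤ ∑ i ∈ range (n+1), f (n+2) * ((n+2-1-i:ℕ):ℝ) * y^(n+2-(n+2)+i) := by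
      have h0 : (0:ℕ) ∈ range (n+1) := by simp
      have := Finset.single_le_sum (f := fun i => f (n+2) * ((n+2-1-i:ℕ):ℝ) * y^(n+2-(n+2)+i))
        (fun i _ => by have := hfnonneg (n+2); positivity) h0
      simpa using this.trans_eq' (by norm_num [Nat.add_sub_cancel]; ring)
    have h3 := Finset.single_le_sum
      (f := fun k => ∑ i ∈ range (k-1), f k * ((k-1-i:ℕ):ℝ) * y^(n+2-k+i))
      inner_nonneg (show n+2 ∈ range (n+3) by simp)
    exact le_trans h2 h3
  -- Step D : r.eval 0 = -f (n+2)
  have hr0eval : r.eval 0 = -f (n+2) := by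
    rw [heval 0]
    rw [Finset.sum_range_succ
      (fun k => ∑ i ∈ range (k-1), f k * (0:ℝ)^(n+2-k+i)) (n+2)]
    have h1 : ∑ k ∈ range (n+2), (∑ i ∈ range (k-1), f k * (0:ℝ)^(n+2-k+i)) = 0 := by
      refine Finset.sum_eq_zero fun k hk => ?_
      simp only [mem_range] at hk
      refine Finset.sum_eq_zero fun i hi => ?_
      simp only [mem_range] at hi
      rw [zero_pow (by omega)]
      ring
    have h2 : ∑ i ∈ range (n+2-1), f (n+2) * (0:ℝ)^(n+2-(n+2)+i) = f (n+2) := by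
      rw [show n+2-1 = n+1 from by omega]
      simp only [Nat.sub_self, zero_add]
      rw [Finset.sum_range_succ' (fun i => f (n+2) * (0:ℝ)^i) n]
      simp
    rw [h1, h2]
    rw [zero_pow (by omega)]
    ring
  have hr0 : r ≠ 0 := by
    intro h
    rw [h, eval_zero] at hr0eval
    linarith
  -- Step E : r.eval B > 0 for B = 1/f 0 + 2
  set B : ℝ := 1 / f 0 + 2 with hB
  have hBpos : (0:ℝ) < B := by positivity
  have hB1 : (1:ℝ) < B := by
    have : 0 < 1 / f 0 := by positivity
    rw [hB]; linarith
  have hqB : 0 < q.eval B := by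
    rw [hq]
    simp only [eval_sub, eval_pow, eval_X, eval_C, eval_mul, eval_finset_sum]
    have h1 : f 0 * B^(n+2) ≤ ∑ k ∈ range (n+3), f k * B^(n+2-k) := by
      have := Finset.single_le_sum (f := fun k => f k * B^(n+2-k))
        (fun k _ => by have := hfnonneg k; positivity) (show 0 ∈ range (n+3) by simp)
      exact this.trans_eq' (by norm_num)
    have h2 : B^(n+1) < f 0 * B^(n+2) := by
      have hfB : f 0 * B = 1 + 2 * f 0 := by rw [hB]; field_simp
      have : f 0 * B^(n+2) = (f 0 * B) * B^(n+1) := by rw [pow_succ]; ring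
      rw [this, hfB]
      have hBp : 0 < B^(n+1) := pow_pos hBpos _
      nlinarith
    linarith
  have hrB : 0 < r.eval B := by
    have h1 : (B - 1) * r.eval B = q.eval B := by rw [hfac]; simp
    nlinarith
  -- Step F : existence of a positive root of r
  have hcont : Continuous fun x : ℝ => r.eval x := r.continuous
  obtain ⟨y₀, hy₀mem, hy₀⟩ : ∃ y ∈ Set.Ioo (0:ℝ) B, r.eval y = 0 := by
    have := intermediate_value_Ioo (le_of_lt hBpos) hcont.continuousOn
    have h0 : (0:ℝ) ∈ Set.Ioo (r.eval 0) (r.eval B) := by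
      rw [hr0eval]; constructor <;> [linarith; linarith]
    obtain ⟨y, hy, hy'⟩ := this h0
    exact ⟨y, hy, hy'⟩
  have hy₀pos : 0 < y₀ := hy₀mem.1
  -- Step G : uniqueness of positive roots
  have huniq : ∀ a b : ℝ, 0 < a → a < b → r.eval a = 0 → r.eval b = 0 → False := by
    intro a b ha hab hra hrb
    have hcontOn : ContinuousOn (fun y : ℝ => r.eval y / y^(n+1)) (Set.Icc a b) := by
      refine ContinuousOn.div hcont.continuousOn (by fun_prop) ?_
      intro x hx
      exact pow_ne_zero _ (ne_of_gt (lt_of_lt_of_le ha hx.1))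
    have heq : (fun y : ℝ => r.eval y / y^(n+1)) a = (fun y : ℝ => r.eval y / y^(n+1)) b := by
      simp [hra, hrb]
    obtain ⟨c, hc, hderiv⟩ := exists_deriv_eq_zero hab hcontOn heq
    have hcpos : 0 < c := lt_trans ha hc.1
    have hd : HasDerivAt (fun y : ℝ => r.eval y / y^(n+1))
        (((derivative r).eval c * c^(n+1) - r.eval c * (((n+1:ℕ):ℝ) * c^(n+1-1))) / (c^(n+1))^2) c :=
      HasDerivAt.div (r.hasDerivAt c) (hasDerivAt_pow (n+1) c) (pow_ne_zero _ hcpos.ne')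
    rw [hd.deriv] at hderiv
    have hden : ((c^(n+1))^2 : ℝ) ≠ 0 := pow_ne_zero _ (pow_ne_zero _ hcpos.ne')
    have hnum : (derivative r).eval c * c^(n+1) - r.eval c * (((n+1:ℕ):ℝ) * c^(n+1-1)) = 0 := by
      exact (div_eq_zero_iff.mp hderiv).resolve_right hden
    simp only [Nat.add_sub_cancel] at hnum
    have hT := hTpos c hcpos
    have hpow : 0 < c^n := pow_pos hcpos n
    have h5 : c^n * (((n:ℝ)+1) * f (n+2))
        ≤ c^n * (c * (derivative r).eval c - ((n:ℝ)+1) * r.eval c) :=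
      mul_le_mul_of_nonneg_left hT (le_of_lt hpow)
    have h6 : c^n * (c * (derivative r).eval c - ((n:ℝ)+1) * r.eval c)
        = (derivative r).eval c * c^(n+1) - r.eval c * (((n+1:ℕ):ℝ) * c^n) := by
      push_cast
      rw [pow_succ]
      ring
    rw [h6, hnum] at h5
    have hposT : 0 < c^n * (((n:ℝ)+1) * f (n+2)) := by positivity
    linarith
  -- Step H : multiplicity of any positive root is 1
  have hmult : ∀ z : ℝ, 0 < z → r.IsRoot z → rootMultiplicity z r = 1 := by
    intro z hz hroot
    have hge : 1 ≤ rootMultiplicity z r := (Polynomial.rootMultiplicity_pos hr0).mpr hroot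
    by_contra hne
    have h2 : 2 ≤ rootMultiplicity z r := by omega
    have hdvd : (X - C z)^2 ∣ r :=
      dvd_trans (pow_dvd_pow _ h2) (Polynomial.pow_rootMultiplicity_dvd r z)
    obtain ⟨s, hs⟩ := hdvd
    have hder0 : (derivative r).eval z = 0 := by
      rw [hs]
      simp [derivative_mul, derivative_pow, eval_add, eval_mul, eval_pow, eval_sub,
        eval_C, eval_X, sub_self]
    have hT := hTpos z hz
    have hev : r.eval z = 0 := hroot
    rw [hder0, hev] at hT
    have : 0 < ((n:ℝ)+1) * f (n+2) := by positivity
    linarith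
  -- final counting
  have hX1 : (X - 1 : ℝ[X]) = X - C 1 := by rw [C_1]
  have hX1ne : (X - 1 : ℝ[X]) ≠ 0 := by rw [hX1]; exact X_sub_C_ne_zero 1
  have hqne : q ≠ 0 := by rw [hfac]; exact mul_ne_zero hX1ne hr0
  have hpne : p ≠ 0 := by
    intro h
    rw [h, mul_zero] at hqp
    exact hqne hqp.symm
  have hroots : p.roots = {1} + r.roots := by
    have h1 : p.roots = q.roots := by rw [← hqp, Polynomial.roots_C_mul _ hf0']
    rw [h1, hfac, Polynomial.roots_mul (hfac ▸ hqne), hX1, Polynomial.roots_X_sub_C]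
  have hfilter : Multiset.filter (fun z => 0 < z) r.roots = {y₀} := by
    refine Multiset.ext.mpr fun z => ?_
    rw [Multiset.count_filter, Multiset.count_singleton]
    by_cases hz : z = y₀
    · subst hz
      rw [if_pos hy₀pos, Polynomial.count_roots, if_pos rfl]
      exact hmult z hy₀pos hy₀
    · rw [if_neg hz]
      by_cases hzpos : 0 < z
      · rw [if_pos hzpos, Polynomial.count_roots]
        apply Polynomial.rootMultiplicity_eq_zero
        intro hzr
        rcases lt_trichotomy z y₀ with h | h | h
        · exact huniq z y₀ hzpos h hzr hy₀
        · exact hz h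
        · exact huniq y₀ z hy₀pos h hy₀ hzr
      · rw [if_neg hzpos]
  constructor
  · rw [hroots, Multiset.filter_add, Multiset.card_add, hfilter]
    rw [Multiset.filter_singleton, if_pos zero_lt_one]
    simp
  · rw [hroots]
    simp
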